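/- Fourth-root restriction: for every n ≥ 5, 3^((F_n - 1)/4) is not congruent to -1 modulo F_n, where F_n = 2^(2^n) + 1. -/

import Mathlib

lemma aux_ord (K p : ℕ) (hK : 4 ≤ K) [hpp : Fact p.Prime] (hp2 : p ≠ 2)
    (h : (3 : ZMod p) ^ (2 ^ (K - 2)) = -1) : 2 ^ (K - 1) ∣ p - 1 := by
  have hlt : 2 < p := lt_of_le_of_ne hpp.out.two_le (Ne.symm hp2)
  haveI : Fact (2 < p) := ⟨hlt⟩
  haveI : Fact (1 < p) := ⟨by omega⟩
  have hne : (-1 : ZMod p) ≠ 1 := ZMod.neg_one_ne_one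
  have ha : (3 : ZMod p) ≠ 0 := by
    intro h0
    rw [h0, zero_pow (by positivity)] at h
    exact one_ne_zero (neg_eq_zero.mp h.symm)
  have h1 : (3 : ZMod p) ^ (2 ^ (K - 1)) = 1 := by
    have he : 2 ^ (K - 1) = 2 ^ (K - 2) * 2 := by
      rw [← pow_succ]; congr 1; omega
    rw [he, pow_mul, h, neg_one_sq]
  have hdvd : orderOf (3 : ZMod p) ∣ 2 ^ (K - 1) := orderOf_dvd_of_pow_eq_one h1
  obtain ⟨j, hj, hjo⟩ := (Nat.dvd_prime_pow Nat.prime_two).mp hdvd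
  have hje : j = K - 1 := by
    by_contra hne'
    have hj2 : j ≤ K - 2 := by omega
    have hd2 : orderOf (3 : ZMod p) ∣ 2 ^ (K - 2) := hjo ▸ pow_dvd_pow 2 hj2
    have := orderOf_dvd_iff_pow_eq_one.mp hd2
    rw [h] at this
    exact hne this
  rw [← hje, ← hjo]
  exact ZMod.orderOf_dvd_card_sub_one ha

lemma aux_sq22 : ((2 : ZMod 3)) ^ 2 = 1 := by decide

lemma aux_one_add_one : (1 : ZMod 3) + 1 = 2 := by decide

lemma aux_two_not_sq : ¬ IsSquare (2 : ZMod 3) := by decide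

lemma aux_main (K : ℕ) (hK : 4 ≤ K) (hKe : 2 ∣ K)
    (h : (3 : ZMod (2 ^ K + 1)) ^ (2 ^ (K - 2)) = -1) : False := by
  set N := 2 ^ K + 1 with hN
  have hK2 : (16 : ℕ) ≤ 2 ^ K := by
    calc (16 : ℕ) = 2 ^ 4 := by norm_num
    _ ≤ 2 ^ K := Nat.pow_le_pow_right (by norm_num) hK
  have hNodd : ¬ (2 ∣ N) := by
    have : 2 ∣ 2 ^ K := dvd_pow_self 2 (by omega)
    omega
  have hN2 : 2 ≤ N := by omega
  -- every prime divisor of N is ≥ 2^(K-1) + 1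
  have key : ∀ p : ℕ, p.Prime → p ∣ N → 2 ^ (K - 1) + 1 ≤ p := by
    intro p hp hpd
    haveI : Fact p.Prime := ⟨hp⟩
    have hp2 : p ≠ 2 := by rintro rfl; exact hNodd hpd
    have hp3 : 3 ≤ p := by have := hp.two_le; omega
    have hcast : (3 : ZMod p) ^ (2 ^ (K - 2)) = -1 := by
      have := congrArg (ZMod.castHom hpd (ZMod p)) h
      rw [map_pow, map_neg, map_one, map_ofNat] at this
      exact this
    have hdvd := aux_ord K p hK hp2 hcast
    have := Nat.le_of_dvd (by omega) hdvd
    omega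
  -- N is prime
  have hNprime : N.Prime := by
    by_contra hnp
    have hsq := Nat.minFac_sq_le_self (by omega) hnp
    have hple := key N.minFac (Nat.minFac_prime (by omega)) (Nat.minFac_dvd N)
    have h2K : 2 ^ (K - 1) * 2 ^ (K - 1) = 2 ^ K * 2 ^ (K - 2) := by
      rw [← pow_add, ← pow_add]; congr 1; omega
    have h4 : (4 : ℕ) ≤ 2 ^ (K - 2) := by
      calc (4 : ℕ) = 2 ^ 2 := by norm_num
      _ ≤ 2 ^ (K - 2) := Nat.pow_le_pow_right (by norm_num) (by omega)
    have e1 : 2 ^ (K - 1) * 2 = 2 ^ K := by rw [← pow_succ]; congr 1; omega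
    have e2 : 2 ^ K * 4 ≤ 2 ^ K * 2 ^ (K - 2) := Nat.mul_le_mul_left _ h4
    have e3 := Nat.mul_le_mul hple hple
    rw [pow_two] at hsq
    nlinarith [e1, e2, e3, hsq, h2K]
  haveI : Fact N.Prime := ⟨hNprime⟩
  haveI : Fact (1 < N) := ⟨by omega⟩
  -- 3 is a square mod N
  have h3ne : (3 : ZMod N) ≠ 0 := by
    intro h0
    rw [h0, zero_pow (by positivity)] at h
    exact one_ne_zero (neg_eq_zero.mp h.symm)
  have h1 : (3 : ZMod N) ^ (2 ^ (K - 1)) = 1 := by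
    have he : 2 ^ (K - 1) = 2 ^ (K - 2) * 2 := by
      rw [← pow_succ]; congr 1; omega
    rw [he, pow_mul, h, neg_one_sq]
  have hNhalf : N / 2 = 2 ^ (K - 1) := by
    have he : 2 ^ K = 2 ^ (K - 1) * 2 := by rw [← pow_succ]; congr 1; omega
    omega
  have hsq3 : IsSquare (3 : ZMod N) := by
    rw [ZMod.euler_criterion N h3ne, hNhalf]
    exact h1
  -- quadratic reciprocity contradiction
  have hN4 : N % 4 = 1 := by
    have hdd : (4 : ℕ) ∣ 2 ^ K := by
      have : (2 : ℕ) ^ 2 ∣ 2 ^ K := pow_dvd_pow 2 (by omega)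
      simpa using this
    omega
  haveI : Fact (Nat.Prime 3) := ⟨by norm_num⟩
  have hqr := ZMod.exists_sq_eq_prime_iff_of_mod_four_eq_one (p := N) (q := 3) hN4 (by norm_num)
  have hcast3 : ((3 : ℕ) : ZMod N) = (3 : ZMod N) := by push_cast; ring
  rw [hcast3] at hqr
  have hNmod3 : ((N : ℕ) : ZMod 3) = 2 := by
    obtain ⟨m, rfl⟩ := hKe
    rw [hN]
    push_cast
    rw [pow_mul]
    rw [aux_sq22, one_pow]
    exact aux_one_add_one
  rw [hqr, hNmod3] at hsq3
  exact aux_two_not_sq hsq3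

theorem stmt14 (n : ℕ) (hn : 5 ≤ n) :
    (3 : ZMod (2 ^ 2 ^ n + 1)) ^ ((2 ^ 2 ^ n + 1 - 1) / 4) ≠ -1 := by
  have hK : 4 ≤ 2 ^ n := by
    calc (4 : ℕ) = 2 ^ 2 := by norm_num
    _ ≤ 2 ^ n := Nat.pow_le_pow_right (by norm_num) (by omega)
  have hdiv : (2 ^ 2 ^ n + 1 - 1) / 4 = 2 ^ (2 ^ n - 2) := by
    rw [Nat.add_sub_cancel]
    have h4 : (4 : ℕ) = 2 ^ 2 := by norm_num
    rw [h4, Nat.pow_div (by omega) (by norm_num)]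
  rw [hdiv]
  intro h
  exact aux_main (2 ^ n) hK (dvd_pow_self 2 (by omega)) h
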